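/- Let 0 < q₂ < q₁ < 1 and γ₁, γ₂ > 0, and define U(α) := −(1/γ₁)·ln(q₁ e^{−γ₁ α} + 1 − q₁), L(α) := (1/γ₂)·ln(q₂ e^{γ₂ α} + 1 − q₂). Then there exists a unique α* > 0 with U(α*) = L(α*), and for every α ∈ (0, α*) one has 0 < L(α) < U(α). -/

import Mathlib

open Real Set

theorem stmt17 (q₁ q₂ γ₁ γ₂ : ℝ)
    (hq2 : 0 < q₂) (hq21 : q₂ < q₁) (hq1 : q₁ < 1)
    (hγ1 : 0 < γ₁) (hγ2 : 0 < γ₂)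
    (U L : ℝ → ℝ)
    (hU : U = fun α : ℝ => -(1 / γ₁) * Real.log (q₁ * Real.exp (-(γ₁ * α)) + 1 - q₁))
    (hL : L = fun α : ℝ => (1 / γ₂) * Real.log (q₂ * Real.exp (γ₂ * α) + 1 - q₂)) :
    ∃ αstar : ℝ,
      (0 < αstar ∧ U αstar = L αstar) ∧
      (∀ α : ℝ, 0 < α → U α = L α → α = αstar) ∧
      (∀ α : ℝ, 0 < α → α < αstar → 0 < L α ∧ L α < U α) := by
  have hq1pos : 0 < q₁ := hq2.trans hq21
  have hq2lt1 : q₂ < 1 := hq21.trans hq1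
  -- positivity of the log arguments
  have hA1 : ∀ α : ℝ, 0 < q₁ * Real.exp (-(γ₁ * α)) + 1 - q₁ := by
    intro α
    have := Real.exp_pos (-(γ₁ * α))
    nlinarith
  have hA2 : ∀ α : ℝ, 0 < q₂ * Real.exp (γ₂ * α) + 1 - q₂ := by
    intro α
    have := Real.exp_pos (γ₂ * α)
    nlinarith
  -- L positive on positive α
  have hLpos : ∀ α : ℝ, 0 < α → 0 < L α := by
    intro α hα
    rw [hL]
    have h1 : (1:ℝ) < Real.exp (γ₂ * α) := by
      have : Real.exp 0 < Real.exp (γ₂ * α) := Real.exp_lt_exp.2 (by positivity)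
      simpa using this
    have harg : (1:ℝ) < q₂ * Real.exp (γ₂ * α) + 1 - q₂ := by nlinarith
    have := Real.log_pos harg
    positivity
  -- define h = U - L
  set f : ℝ → ℝ := fun α => U α - L α with hf
  -- derivative of f
  set D : ℝ → ℝ := fun α =>
    q₁ * Real.exp (-(γ₁ * α)) / (q₁ * Real.exp (-(γ₁ * α)) + 1 - q₁)
      - q₂ * Real.exp (γ₂ * α) / (q₂ * Real.exp (γ₂ * α) + 1 - q₂) with hD
  have hderiv : ∀ α : ℝ, HasDerivAt f (D α) α := by
    intro α
    have h1 : HasDerivAt (fun α : ℝ => q₁ * Real.exp (-(γ₁ * α)) + 1 - q₁)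
        (q₁ * (Real.exp (-(γ₁ * α)) * (-γ₁))) α := by
      have : HasDerivAt (fun α : ℝ => -(γ₁ * α)) (-γ₁) α := by
        simpa using (hasDerivAt_id α).const_mul (-γ₁)
      simpa using ((((this.exp).const_mul q₁).add_const 1).sub_const q₁)
    have h1' : HasDerivAt (fun α : ℝ => -(1/γ₁) * Real.log (q₁ * Real.exp (-(γ₁ * α)) + 1 - q₁))
        (-(1/γ₁) * (q₁ * (Real.exp (-(γ₁ * α)) * (-γ₁)) / (q₁ * Real.exp (-(γ₁ * α)) + 1 - q₁))) α :=
      (h1.log (hA1 α).ne').const_mul _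
    have h2 : HasDerivAt (fun α : ℝ => q₂ * Real.exp (γ₂ * α) + 1 - q₂)
        (q₂ * (Real.exp (γ₂ * α) * γ₂)) α := by
      have : HasDerivAt (fun α : ℝ => γ₂ * α) γ₂ α := by
        simpa using (hasDerivAt_id α).const_mul γ₂
      simpa using ((((this.exp).const_mul q₂).add_const 1).sub_const q₂)
    have h2' : HasDerivAt (fun α : ℝ => (1/γ₂) * Real.log (q₂ * Real.exp (γ₂ * α) + 1 - q₂))
        ((1/γ₂) * (q₂ * (Real.exp (γ₂ * α) * γ₂) / (q₂ * Real.exp (γ₂ * α) + 1 - q₂))) α :=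
      (h2.log (hA2 α).ne').const_mul _
    have := h1'.sub h2'
    have heq : f = fun α : ℝ =>
        (-(1/γ₁) * Real.log (q₁ * Real.exp (-(γ₁ * α)) + 1 - q₁))
          - ((1/γ₂) * Real.log (q₂ * Real.exp (γ₂ * α) + 1 - q₂)) := by
      funext α; simp [hf, hU, hL]
    rw [heq]
    have hA1' := (hA1 α).ne'
    have hA2' := (hA2 α).ne'
    have hγ1' := hγ1.ne'
    have hγ2' := hγ2.ne'
    refine this.congr_deriv ?_
    simp only [hD]
    field_simp
  have hcont : Continuous f := by
    exact continuous_iff_continuousAt.2 fun x => (hderiv x).continuousAt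
  have hderiveq : deriv f = D := funext fun α => (hderiv α).deriv
  -- D is strictly antitone
  have hanti : StrictAnti D := by
    intro a b hab
    have e1 : Real.exp (-(γ₁ * b)) < Real.exp (-(γ₁ * a)) := by
      apply Real.exp_lt_exp.2; nlinarith
    have e2 : Real.exp (γ₂ * a) < Real.exp (γ₂ * b) := by
      apply Real.exp_lt_exp.2; nlinarith
    have p1a := hA1 a; have p1b := hA1 b; have p2a := hA2 a; have p2b := hA2 b
    have t1 : q₁ * Real.exp (-(γ₁ * b)) / (q₁ * Real.exp (-(γ₁ * b)) + 1 - q₁)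
        < q₁ * Real.exp (-(γ₁ * a)) / (q₁ * Real.exp (-(γ₁ * a)) + 1 - q₁) := by
      rw [div_lt_div_iff₀ p1b p1a]
      nlinarith [mul_lt_mul_of_pos_left e1 (mul_pos hq1pos (by linarith : (0:ℝ) < 1 - q₁)),
        Real.exp_pos (-(γ₁ * a)), Real.exp_pos (-(γ₁ * b))]
    have t2 : q₂ * Real.exp (γ₂ * a) / (q₂ * Real.exp (γ₂ * a) + 1 - q₂)
        < q₂ * Real.exp (γ₂ * b) / (q₂ * Real.exp (γ₂ * b) + 1 - q₂) := by
      rw [div_lt_div_iff₀ p2a p2b]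
      nlinarith [mul_lt_mul_of_pos_left e2 (mul_pos hq2 (by linarith : (0:ℝ) < 1 - q₂)),
        Real.exp_pos (γ₂ * a), Real.exp_pos (γ₂ * b)]
    simp only [hD]
    linarith
  have hconc : StrictConcaveOn ℝ univ f :=
    StrictAnti.strictConcaveOn_univ_of_deriv hcont (hderiveq ▸ hanti)
  -- f 0 = 0
  have hf0 : f 0 = 0 := by simp [hf, hU, hL]
  -- f positive somewhere near 0: derivative at 0 is q₁ - q₂ > 0
  have hD0 : D 0 = q₁ - q₂ := by
    simp only [hD]
    norm_num
  have hex_pos : ∃ x : ℝ, 0 < x ∧ 0 < f x := by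
    have hd0 : HasDerivAt f (q₁ - q₂) 0 := hD0 ▸ hderiv 0
    have hslope := hasDerivAt_iff_tendsto_slope.1 hd0
    have hev : ∀ᶠ x in nhdsWithin 0 {(0:ℝ)}ᶜ, 0 < slope f 0 x :=
      hslope (eventually_gt_nhds (by linarith : (0:ℝ) < q₁ - q₂))
    have hle : nhdsWithin (0:ℝ) (Ioi 0) ≤ nhdsWithin 0 {(0:ℝ)}ᶜ :=
      nhdsWithin_mono _ (fun x hx => ne_of_gt hx)
    have hev' : ∀ᶠ x in nhdsWithin (0:ℝ) (Ioi 0), 0 < slope f 0 x := hle hev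
    have hev'' : ∀ᶠ x in nhdsWithin (0:ℝ) (Ioi 0), 0 < x := self_mem_nhdsWithin
    obtain ⟨x, hx1, hx2⟩ := (hev'.and hev'').exists
    refine ⟨x, hx2, ?_⟩
    have : 0 < (f x - f 0) / (x - 0) := by simpa [slope_def_field, div_eq_iff] using hx1
    rw [hf0, sub_zero, sub_zero] at this
    exact (div_pos_iff.1 this).resolve_right (fun h => absurd hx2 (not_lt.2 h.2.le)) |>.1
  obtain ⟨x₀, hx₀pos, hfx₀⟩ := hex_pos
  -- f negative at a large point
  have hUbound : ∀ α : ℝ, U α ≤ -(1/γ₁) * Real.log (1 - q₁) := by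
    intro α
    rw [hU]
    have h1 : (1 - q₁ : ℝ) ≤ q₁ * Real.exp (-(γ₁ * α)) + 1 - q₁ := by
      have := Real.exp_pos (-(γ₁ * α)); nlinarith
    have := Real.log_le_log (by linarith) h1
    have hγ1' : 0 ≤ 1/γ₁ := by positivity
    nlinarith
  have hLbound : ∀ α : ℝ, Real.log q₂ / γ₂ + α ≤ L α := by
    intro α
    rw [hL]
    have h1 : q₂ * Real.exp (γ₂ * α) ≤ q₂ * Real.exp (γ₂ * α) + 1 - q₂ := by linarith
    have h2 : Real.log (q₂ * Real.exp (γ₂ * α)) ≤ Real.log (q₂ * Real.exp (γ₂ * α) + 1 - q₂) :=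
      Real.log_le_log (by positivity) h1
    rw [Real.log_mul (ne_of_gt hq2) (Real.exp_ne_zero _), Real.log_exp] at h2
    have h3 := mul_le_mul_of_nonneg_left h2 (le_of_lt (one_div_pos.2 hγ2))
    have hγ2' : γ₂ ≠ 0 := ne_of_gt hγ2
    calc Real.log q₂ / γ₂ + α = 1/γ₂ * (Real.log q₂ + γ₂ * α) := by field_simp
      _ ≤ _ := h3
  -- large point where f is negative
  set M : ℝ := -(1/γ₁) * Real.log (1 - q₁) with hM
  set X : ℝ := max (x₀ + 1) (M - Real.log q₂ / γ₂ + 1) with hX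
  have hXx₀ : x₀ < X := lt_of_lt_of_le (by linarith) (le_max_left _ _)
  have hfX : f X < 0 := by
    have h1 := hUbound X
    have h2 := hLbound X
    have h3 : M - Real.log q₂ / γ₂ + 1 ≤ X := le_max_right _ _
    simp only [hf]
    linarith
  -- IVT gives a zero αstar in (x₀, X)
  obtain ⟨αstar, hαmem, hfα⟩ : ∃ αstar ∈ Icc x₀ X, f αstar = 0 := by
    have := intermediate_value_Icc' hXx₀.le hcont.continuousOn
    have h0 : (0:ℝ) ∈ Icc (f X) (f x₀) := ⟨hfX.le, hfx₀.le⟩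
    obtain ⟨c, hc, hc0⟩ := this h0
    exact ⟨c, hc, hc0⟩
  have hαpos : 0 < αstar := lt_of_lt_of_le hx₀pos hαmem.1
  -- key strict concavity fact: f is positive strictly between 0 and any positive zero
  have key : ∀ a b : ℝ, 0 < a → a < b → f b = 0 → 0 < f a := by
    intro a b ha hab hfb
    have hb : 0 < b := ha.trans hab
    have hne : (0:ℝ) ≠ b := ne_of_lt hb
    have hw1 : (0:ℝ) < 1 - a/b := by
      have : a/b < 1 := (div_lt_one hb).2 hab
      linarith
    have hw2 : (0:ℝ) < a/b := by positivity
    have hw3 : (1 - a/b) + a/b = 1 := by ring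
    have hcomb := hconc.2 (mem_univ (0:ℝ)) (mem_univ b) hne hw1 hw2 hw3
    simp only [smul_eq_mul, mul_zero, hf0, hfb] at hcomb
    have hab' : (1 - a/b) * 0 + a/b * b = a := by field_simp; ring
    calc (0:ℝ) = (1 - a/b) * 0 + a/b * 0 := by ring
      _ < f ((1 - a/b) * 0 + a/b * b) := by
          simpa [hf0, hfb] using hcomb
      _ = f a := by rw [hab']
  refine ⟨αstar, ⟨hαpos, ?_⟩, ?_, ?_⟩
  · have : U αstar - L αstar = 0 := hfα
    linarith
  · intro α hα hUL
    have hfα' : f α = 0 := by simp [hf, hUL]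
    rcases lt_trichotomy α αstar with h | h | h
    · exact absurd hfα' (ne_of_gt (key α αstar hα h hfα))
    · exact h
    · exact absurd hfα (ne_of_gt (key αstar α hαpos h hfα'))
  · intro α hα hαlt
    have := key α αstar hα hαlt hfα
    have hLα := hLpos α hα
    constructor
    · exact hLα
    · simp only [hf] at this; linarith
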